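/- Let $\lambda > 1$, $\nu > 0$, $k_n = \lambda^n$, and let $u$ be defined by $u_n = k_n^{-3}$ if $n \equiv 0 \pmod 5$ and $u_n = 0$ otherwise. Then $u$ is a stationary solution of the real Sabra shell model with forcing $g_n = \nu k_n^{-1}$ for $n \equiv 0 \pmod 5$, $g_n = 0$ otherwise: for every $n \ge 1$, $k_{n+1} u_{n+2} u_{n+1} - \epsilon k_n u_{n+1} u_{n-1} + (\epsilon - 1) k_{n-1} u_{n-1} u_{n-2} - \nu k_n^2 u_n + g_n = 0$ (with $u_0 = u_{-1} = 0$), for any $\epsilon \in \mathbb{R}$. -/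

import Mathlib

/-- The multi-mode sequence `u_n = k_n^{-3}` on shells `n ≡ 0 (mod 5)` is a
stationary solution of the real Sabra shell model with forcing `g_n = ν k_n⁻¹`
on those shells, for any `ε`. -/
theorem sabra_multimode_equilibrium
    (ε lam ν : ℝ) (hlam : 1 < lam) (hν : 0 < ν)
    (k : ℤ → ℝ) (hk : ∀ n, k n = lam ^ n)
    (g u : ℤ → ℝ)
    (hg : ∀ n : ℤ, g n = if 1 ≤ n ∧ (5 : ℤ) ∣ n then ν * (k n)⁻¹ else 0)
    (hu : ∀ n : ℤ, u n = if 1 ≤ n ∧ (5 : ℤ) ∣ n then (k n) ^ (-3 : ℤ) else 0) :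
    ∀ n : ℤ, 1 ≤ n →
      k (n+1) * u (n+2) * u (n+1) - ε * k n * u (n+1) * u (n-1)
        + (ε - 1) * k (n-1) * u (n-1) * u (n-2) - ν * k n ^ 2 * u n + g n = 0 := by
  intro n hn
  have hprod : ∀ a b : ℤ, a ≠ b → a - b ≤ 3 → b ≤ a → u a * u b = 0 := by
    intro a b hne hle hba
    rw [hu a, hu b]
    by_cases ha : 1 ≤ a ∧ (5 : ℤ) ∣ a
    · by_cases hb : 1 ≤ b ∧ (5 : ℤ) ∣ b
      · exfalso; obtain ⟨-, c, hc⟩ := ha; obtain ⟨-, d, hd⟩ := hb; omega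
      · simp [ha, hb]
    · simp [ha]
  have h1 : u (n+2) * u (n+1) = 0 := hprod _ _ (by omega) (by omega) (by omega)
  have h2 : u (n+1) * u (n-1) = 0 := hprod _ _ (by omega) (by omega) (by omega)
  have h3 : u (n-1) * u (n-2) = 0 := hprod _ _ (by omega) (by omega) (by omega)
  have e1 : k (n+1) * u (n+2) * u (n+1) = 0 := by rw [mul_assoc, h1, mul_zero]
  have e2 : ε * k n * u (n+1) * u (n-1) = 0 := by rw [mul_assoc, h2, mul_zero]
  have e3 : (ε - 1) * k (n-1) * u (n-1) * u (n-2) = 0 := by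
    rw [mul_assoc, h3, mul_zero]
  rw [e1, e2, e3]
  have hlam0 : (0:ℝ) < lam := lt_trans one_pos hlam
  have hkn : k n ≠ 0 := by rw [hk]; exact (zpow_pos hlam0 n).ne'
  rw [hu n, hg n]
  by_cases h : 1 ≤ n ∧ (5 : ℤ) ∣ n
  · simp only [h, if_true, and_self]
    rw [hk] at hkn ⊢
    rw [show ((-3 : ℤ)) = -1 + -1 + -1 by ring, zpow_add₀ hkn, zpow_add₀ hkn,
      zpow_neg_one]
    field_simp
    ring
  · simp [h]
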